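/- (Tightness) Let 𝒴 be a nonempty finite set, ℓ : 𝒴 × 𝒴 → ℝ with 0 ≤ ℓ ≤ L, R̂ : 𝒴 → ℝ, M = min_{y''} R̂(y''), Δ(y') = M − R̂(y'), and let ĥ be an element of argmin R̂ maximizing ℓ(·, y) over the argmin set. If the surrogate is L^ρ(y) = min{ max_{y'∈𝒴} [ℓ(y', y) + Δ(y')/ρ], L }, then there exists ρ* > 0 such that for all ρ ∈ (0, ρ*], L^ρ(y) = ℓ(ĥ, y). -/

import Mathlib

/-- Tightness: for a finite output space there is `ρ* > 0` such that for
all `ρ ∈ (0, ρ*]` the truncated ρ-surrogate loss coincides with the loss `ℓ(ĥ, y)` of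
the estimated-risk minimizer `ĥ` (chosen with maximal loss among minimizers). -/
theorem surrogate_loss_tight {𝒴 : Type*} [Fintype 𝒴] [Nonempty 𝒴]
    (ℓ : 𝒴 → 𝒴 → ℝ) (L : ℝ) (hL : 0 < L)
    (hbdd : ∀ a b, 0 ≤ ℓ a b ∧ ℓ a b ≤ L)
    (Rhat : 𝒴 → ℝ) (y : 𝒴) (hhat : 𝒴)
    (hmin : ∀ y'', Rhat hhat ≤ Rhat y'')
    (htie : ∀ y'', (∀ z, Rhat y'' ≤ Rhat z) → ℓ y'' y ≤ ℓ hhat y) :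
    ∃ ρstar > 0, ∀ ρ : ℝ, 0 < ρ → ρ ≤ ρstar →
      min (Finset.univ.sup' Finset.univ_nonempty
        (fun y' => ℓ y' y + (Finset.univ.inf' Finset.univ_nonempty Rhat - Rhat y') / ρ)) L
        = ℓ hhat y := by
  set M : ℝ := Finset.univ.inf' Finset.univ_nonempty Rhat with hM
  have hMeq : M = Rhat hhat := by
    apply le_antisymm
    · exact Finset.inf'_le _ (Finset.mem_univ hhat)
    · exact Finset.le_inf' _ _ (fun z _ => hmin z)
  set S : Finset 𝒴 := Finset.univ.filter (fun y' => M < Rhat y') with hS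
  -- δ : positive gap (or 1 if no non-minimizers)
  have key : ∀ ρstar : ℝ, 0 < ρstar → (∀ y' ∈ S, L * ρstar ≤ Rhat y' - M) →
      ∀ ρ : ℝ, 0 < ρ → ρ ≤ ρstar →
      min (Finset.univ.sup' Finset.univ_nonempty
        (fun y' => ℓ y' y + (M - Rhat y') / ρ)) L = ℓ hhat y := by
    intro ρstar hρstar hgap ρ hρ hρle
    have hsup : Finset.univ.sup' Finset.univ_nonempty
        (fun y' => ℓ y' y + (M - Rhat y') / ρ) = ℓ hhat y := by
      apply le_antisymm
      · apply Finset.sup'_le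
        intro y' _
        by_cases hy' : M < Rhat y'
        · have hyS : y' ∈ S := by simp [hS, hy']
          have h1 : L * ρstar ≤ Rhat y' - M := hgap y' hyS
          have h2 : L * ρ ≤ Rhat y' - M := le_trans (by nlinarith) h1
          have h3 : (M - Rhat y') / ρ ≤ -L := by
            rw [div_le_iff₀ hρ]; nlinarith
          have := (hbdd y' y).2
          have := (hbdd hhat y).1
          linarith
        · have heq : Rhat y' = M := le_antisymm (not_lt.1 hy') (hMeq ▸ hmin y')
          have : ∀ z, Rhat y' ≤ Rhat z := fun z => heq ▸ (hMeq ▸ hmin z)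
          have := htie y' this
          rw [heq]
          simp [this]
      · have := Finset.le_sup' (fun y' => ℓ y' y + (M - Rhat y') / ρ)
          (Finset.mem_univ hhat)
        rw [← hMeq] at this
        simpa only [sub_self, zero_div, add_zero] using this
    rw [hsup, min_eq_left (hbdd hhat y).2]
  by_cases hSe : S.Nonempty
  · set δ : ℝ := S.inf' hSe (fun y' => Rhat y' - M) with hδ
    have hδpos : 0 < δ := by
      apply lt_of_lt_of_le _ (le_refl δ)
      rw [hδ]
      apply Finset.lt_inf'_iff hSe |>.2
      intro y' hy'
      have : M < Rhat y' := (Finset.mem_filter.1 hy').2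
      linarith
    refine ⟨δ / L, div_pos hδpos hL, ?_⟩
    intro ρ hρ hρle
    exact key (δ / L) (div_pos hδpos hL)
      (fun y' hy' => by
        have : δ ≤ Rhat y' - M := Finset.inf'_le _ hy'
        have : L * (δ / L) = δ := by field_simp
        linarith [Finset.inf'_le (fun y' => Rhat y' - M) hy'])
      ρ hρ hρle
  · refine ⟨1, one_pos, ?_⟩
    intro ρ hρ hρle
    exact key 1 one_pos (fun y' hy' => absurd ⟨y', hy'⟩ hSe) ρ hρ hρle
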